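/- arXiv:2512.08159 — 2 statements merged into one kernel-verified Lean document; each statement's English description precedes it below -/
import Mathlib

section
/- For any open interval I and continuous f : X → ℝ, the quotient map q_f induces a bijection from the set of connected components of f⁻¹(I) to the set of connected components of f̃⁻¹(I) in the Reeb graph, natural with respect to inclusions of open intervals I ⊆ J. -/
open CategoryTheory Set
open scoped NNReal ENNReal

/-- The Reeb relation of `f : X → ℝ`: `x ∼_f y` iff `y` lies in the connected
component of `x` inside the level set `f ⁻¹' {f x}`. -/
def ReebRel {X : Type*} [TopologicalSpace X] (f : X → ℝ) (x y : X) : Prop :=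
  y ∈ connectedComponentIn (f ⁻¹' {f x}) x

theorem ReebRel.apply_eq {X : Type*} [TopologicalSpace X] {f : X → ℝ} {x y : X}
    (h : ReebRel f x y) : f x = f y :=
  (show f y = f x from connectedComponentIn_subset (f ⁻¹' {f x}) x h).symm

/-- The function induced by `f` on the Reeb quotient. -/
def reebTilde {X : Type*} [TopologicalSpace X] (f : X → ℝ) : Quot (ReebRel f) → ℝ :=
  Quot.lift f fun _ _ h => h.apply_eq

/-- The poset of nonempty open intervals `(a, b)` of `ℝ`, ordered by inclusion. -/
def RInt : Type := {p : ℝ × ℝ // p.1 < p.2}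

namespace RInt

instance : Preorder RInt where
  le I J := J.1.1 ≤ I.1.1 ∧ I.1.2 ≤ J.1.2
  le_refl I := ⟨le_refl _, le_refl _⟩
  le_trans I J K h h' := ⟨h'.1.trans h.1, h.2.trans h'.2⟩

/-- The underlying open interval `(a, b) ⊆ ℝ`. -/
def set (I : RInt) : Set ℝ := Set.Ioo I.1.1 I.1.2

theorem set_mono {I J : RInt} (h : I ≤ J) : I.set ⊆ J.set :=
  Set.Ioo_subset_Ioo h.1 h.2

/-- The `δ`-thickening `(a - δ, b + δ)` of the open interval `(a, b)`. -/
def widen (δ : ℝ≥0) (I : RInt) : RInt :=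
  ⟨(I.1.1 - δ, I.1.2 + δ), by
    have h := I.2
    have h0 : (0 : ℝ) ≤ δ := δ.2
    dsimp only
    linarith⟩

theorem widen_mono (δ : ℝ≥0) : Monotone (widen δ) := by
  intro I J h
  exact ⟨by dsimp [widen]; linarith [h.1], by dsimp [widen]; linarith [h.2]⟩

theorem le_widen (δ : ℝ≥0) (I : RInt) : I ≤ widen δ I := by
  have h0 : (0 : ℝ) ≤ δ := δ.2
  exact ⟨by dsimp [widen]; linarith, by dsimp [widen]; linarith⟩

end RInt

/-- The widening functor `ω_δ` sending `(a, b)` to `(a - δ, b + δ)`. -/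
def widenFunctor (δ : ℝ≥0) : RInt ⥤ RInt := (RInt.widen_mono δ).functor

/-- Two functors `C, D : Int ⥤ 𝒜` are `δ`-interleaved if there are natural
transformations `Φ : C ⟶ D ∘ ω_δ` and `Ψ : D ⟶ C ∘ ω_δ` whose composites are
the maps induced by the inclusions `I ⊆ ω_δ (ω_δ I) = ω_{2δ} I`. -/
def IsInterleaving {A : Type*} [Category A] (δ : ℝ≥0) (C D : RInt ⥤ A) : Prop :=
  ∃ (Φ : C ⟶ widenFunctor δ ⋙ D) (Ψ : D ⟶ widenFunctor δ ⋙ C),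
    (∀ I : RInt, Φ.app I ≫ Ψ.app ((widenFunctor δ).obj I) =
      C.map (homOfLE ((RInt.le_widen δ I).trans (RInt.le_widen δ (RInt.widen δ I))))) ∧
    (∀ I : RInt, Ψ.app I ≫ Φ.app ((widenFunctor δ).obj I) =
      D.map (homOfLE ((RInt.le_widen δ I).trans (RInt.le_widen δ (RInt.widen δ I)))))

/-- The interleaving distance between two functors on the poset of open intervals. -/
noncomputable def interleavingDist {A : Type*} [Category A] (C D : RInt ⥤ A) : ℝ≥0∞ :=
  ⨅ (δ : ℝ≥0) (_ : IsInterleaving δ C D), (δ : ℝ≥0∞)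

/-- The Reeb precosheaf `𝒟(X, f)`, sending an open interval `I` to the set of
connected components of `f ⁻¹' I`, with maps induced by inclusions. -/
def reebPrecosheaf {X : Type u} [TopologicalSpace X] (f : X → ℝ) : RInt ⥤ Type u where
  obj I := ConnectedComponents ↥(f ⁻¹' I.set)
  map {I J} h :=
    TypeCat.ofHom
      (continuous_inclusion (Set.preimage_mono (RInt.set_mono h.le))).connectedComponentsMap
  map_id I := by
    apply ConcreteCategory.hom_ext
    intro c
    obtain ⟨x, rfl⟩ := ConnectedComponents.surjective_coe c
    rfl
  map_comp {I J K} h h' := by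
    apply ConcreteCategory.hom_ext
    intro c
    obtain ⟨x, rfl⟩ := ConnectedComponents.surjective_coe c
    rfl

section ReebAux

open Topology

variable {X : Type u} [TopologicalSpace X] (f : X → ℝ)

theorem continuous_reebTilde (hf : Continuous f) : Continuous (reebTilde f) :=
  continuous_quot_lift _ hf

theorem reeb_mk_eq_of_rel {I : RInt} {x y : X} (r : ReebRel f x y)
    (hx : x ∈ f ⁻¹' I.set) (hy : y ∈ f ⁻¹' I.set) :
    (ConnectedComponents.mk ⟨x, hx⟩ : ConnectedComponents ↥(f ⁻¹' I.set)) =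
      ConnectedComponents.mk ⟨y, hy⟩ := by
  have hsub : f ⁻¹' {f x} ⊆ f ⁻¹' I.set := by
    intro z hz
    simp only [Set.mem_preimage, Set.mem_singleton_iff] at hz
    simpa [Set.mem_preimage, hz] using hx
  have hy' : y ∈ connectedComponentIn (f ⁻¹' I.set) x :=
    connectedComponentIn_mono x hsub r
  rw [connectedComponentIn_eq_image hx] at hy'
  obtain ⟨b, hb, hbe⟩ := hy'
  have hmem : (⟨y, hy⟩ : ↥(f ⁻¹' I.set)) ∈ connectedComponent (⟨x, hx⟩ : ↥(f ⁻¹' I.set)) := by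
    rwa [show (⟨y, hy⟩ : ↥(f ⁻¹' I.set)) = b from Subtype.ext hbe.symm]
  exact (ConnectedComponents.coe_eq_coe'.mpr hmem).symm

/-- The restriction of the Reeb quotient map to `f ⁻¹' I`. -/
def reebQI (I : RInt) (a : ↥(f ⁻¹' I.set)) : ↥(reebTilde f ⁻¹' I.set) :=
  ⟨Quot.mk (ReebRel f) a.1, a.2⟩

theorem continuous_reebQI (I : RInt) : Continuous (reebQI f I) :=
  Continuous.subtype_mk (continuous_quot_mk.comp continuous_subtype_val) _

theorem isQuotientMap_reebQI (hf : Continuous f) (I : RInt) : IsQuotientMap (reebQI f I) := by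
  simp_rw [isQuotientMap_iff, isCoinducing_iff, and_comm, iff_comm]
  constructor
  · rintro ⟨b, hb⟩
    obtain ⟨x, rfl⟩ := Quot.exists_rep b
    exact ⟨⟨x, hb⟩, rfl⟩
  · intro V
    constructor
    · intro hV; exact hV.preimage (continuous_reebQI f I)
    · intro hV
      have hS : IsOpen (f ⁻¹' I.set) := isOpen_Ioo.preimage hf
      have himg : IsOpen (Subtype.val '' (reebQI f I ⁻¹' V)) :=
        hS.isOpenMap_subtype_val _ hV
      have hsat : Quot.mk (ReebRel f) ⁻¹' (Subtype.val '' V) =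
          Subtype.val '' (reebQI f I ⁻¹' V) := by
        ext x
        simp only [Set.mem_preimage, Set.mem_image]
        constructor
        · rintro ⟨b, hbV, hbe⟩
          have hx : f x ∈ I.set := by
            have h2 := b.2
            rw [hbe] at h2
            exact h2
          refine ⟨⟨x, hx⟩, ?_, rfl⟩
          have he : reebQI f I ⟨x, hx⟩ = b := Subtype.ext hbe.symm
          rw [he]; exact hbV
        · rintro ⟨a, haV, hae⟩
          exact ⟨reebQI f I a, haV, by rw [← hae]; rfl⟩
      have hopen : IsOpen (Subtype.val '' V) := by
        rw [← (isQuotientMap_quot_mk (r := ReebRel f)).isOpen_preimage, hsat]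
        exact himg
      have hVeq : V = Subtype.val ⁻¹' (Subtype.val '' V) :=
        (Set.preimage_image_eq V Subtype.val_injective).symm
      rw [hVeq]
      exact hopen.preimage continuous_subtype_val

open Classical in
/-- Auxiliary lift for the inverse map. -/
noncomputable def reebGAux (I : RInt) : Quot (ReebRel f) → Option (ConnectedComponents ↥(f ⁻¹' I.set)) :=
  Quot.lift (fun x => if h : f x ∈ I.set then some (ConnectedComponents.mk ⟨x, h⟩) else none)
    (fun x y r => by
      by_cases hx : f x ∈ I.set
      · have hy : f y ∈ I.set := r.apply_eq ▸ hx
        rw [dif_pos hx, dif_pos hy, reeb_mk_eq_of_rel f r hx hy]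
      · have hy : ¬ f y ∈ I.set := fun h => hx (r.apply_eq.symm ▸ h)
        rw [dif_neg hx, dif_neg hy])

theorem reebGAux_isSome (I : RInt) (b : ↥(reebTilde f ⁻¹' I.set)) :
    (reebGAux f I b.1).isSome := by
  obtain ⟨b, hb⟩ := b
  induction b using Quot.ind with
  | _ x =>
    have hx : f x ∈ I.set := hb
    simp [reebGAux, dif_pos hx]

/-- The inverse map on points: a point of `reebTilde f ⁻¹' I` determines a connected
component of `f ⁻¹' I`. -/
noncomputable def reebG (I : RInt) (b : ↥(reebTilde f ⁻¹' I.set)) :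
    ConnectedComponents ↥(f ⁻¹' I.set) :=
  (reebGAux f I b.1).get (reebGAux_isSome f I b)

theorem reebG_mk (I : RInt) (a : ↥(f ⁻¹' I.set)) :
    reebG f I (reebQI f I a) = ConnectedComponents.mk a := by
  obtain ⟨x, hx⟩ := a
  simp [reebG, reebGAux, reebQI, hx]

theorem continuous_reebG (hf : Continuous f) (I : RInt) : Continuous (reebG f I) := by
  rw [(isQuotientMap_reebQI f hf I).continuous_iff]
  have h : reebG f I ∘ reebQI f I = ConnectedComponents.mk := funext (reebG_mk f I)
  rw [h]
  exact ConnectedComponents.continuous_coe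

/-- The bijection on connected components induced by the Reeb quotient map. -/
noncomputable def reebEquiv (hf : Continuous f) (I : RInt) :
    ConnectedComponents ↥(f ⁻¹' I.set) ≃ ConnectedComponents ↥(reebTilde f ⁻¹' I.set) where
  toFun := (continuous_reebQI f I).connectedComponentsMap
  invFun := (continuous_reebG f hf I).connectedComponentsLift
  left_inv := by
    intro c
    obtain ⟨a, rfl⟩ := ConnectedComponents.surjective_coe c
    exact reebG_mk f I a
  right_inv := by
    intro c
    obtain ⟨b, rfl⟩ := ConnectedComponents.surjective_coe c
    obtain ⟨b1, hb⟩ := b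
    induction b1 using Quot.ind with
    | _ x =>
      have h := reebG_mk f I ⟨x, hb⟩
      show (continuous_reebQI f I).connectedComponentsMap (reebG f I ⟨Quot.mk _ x, hb⟩) = _
      rw [show reebG f I ⟨Quot.mk _ x, hb⟩ = ConnectedComponents.mk ⟨x, hb⟩ from h]
      rfl

end ReebAux

theorem stmt11 {X : Type u} [TopologicalSpace X] (f : X → ℝ) (hf : Continuous f) :
    ∃ η : reebPrecosheaf f ≅ reebPrecosheaf (reebTilde f),
      ∀ (I : RInt) (x : X) (hx : x ∈ f ⁻¹' I.set),
        η.hom.app I (ConnectedComponents.mk ⟨x, hx⟩) =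
          ConnectedComponents.mk ⟨Quot.mk (ReebRel f) x, hx⟩ := by
  refine ⟨NatIso.ofComponents (fun I => (reebEquiv f hf I).toIso) ?_, ?_⟩
  · intro I J h
    apply ConcreteCategory.hom_ext
    intro c
    obtain ⟨a, rfl⟩ := ConnectedComponents.surjective_coe c
    rfl
  · intro I x hx
    rfl
end

section
/- If H is a path deformation retraction of X in Y and f : X → ℝ is continuous, then the map induced by h₁ on Reeb graphs, Rb(h₁) : Rb(Y, f∘h₁) → Rb(X, f), is an isomorphism of ℝ-spaces with inverse Rb(ι) induced by the inclusion ι : X ↪ Y. -/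
open Set


/-- A continuous map intertwining the real-valued functions descends to Reeb relations. -/
theorem ReebRel.map {X Z : Type*} [TopologicalSpace X] [TopologicalSpace Z]
    {f : X → ℝ} {g : Z → ℝ} {φ : X → Z} (hφ : Continuous φ) (hfg : ∀ x, g (φ x) = f x)
    {x y : X} (h : ReebRel f x y) : ReebRel g (φ x) (φ y) := by
  have hx : x ∈ f ⁻¹' {f x} := rfl
  have himg : φ '' (f ⁻¹' {f x}) ⊆ g ⁻¹' {g (φ x)} := by
    rintro _ ⟨a, ha, rfl⟩
    simp only [mem_preimage, mem_singleton_iff] at ha ⊢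
    rw [hfg, hfg, ha]
  exact connectedComponentIn_mono _ himg
    (hφ.image_connectedComponentIn_subset hx (mem_image_of_mem φ h))

theorem stmt17 {Y : Type*} [TopologicalSpace Y] (A : Set Y) (f : A → ℝ)
    (hf : Continuous f) (H : Y × unitInterval → Y) (hH : Continuous H)
    (h0 : ∀ y, H (y, 0) = y) (h1mem : ∀ y, H (y, 1) ∈ A)
    (h1fix : ∀ x ∈ A, H (x, 1) = x)
    (hpath : ∀ y t, H (H (y, t), 1) = H (y, 1)) :
    ∃ (Φ : Quot (ReebRel (fun z : Y => f ⟨H (z, 1), h1mem z⟩)) → Quot (ReebRel f))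
      (Ψ : Quot (ReebRel f) → Quot (ReebRel (fun z : Y => f ⟨H (z, 1), h1mem z⟩))),
      Continuous Φ ∧ Continuous Ψ ∧
      (∀ y : Y, Φ (Quot.mk (ReebRel (fun z : Y => f ⟨H (z, 1), h1mem z⟩)) y) =
        Quot.mk (ReebRel f) ⟨H (y, 1), h1mem y⟩) ∧
      (∀ a : A, Ψ (Quot.mk (ReebRel f) a) =
        Quot.mk (ReebRel (fun z : Y => f ⟨H (z, 1), h1mem z⟩)) (a : Y)) ∧
      Φ ∘ Ψ = id ∧ Ψ ∘ Φ = id ∧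
      reebTilde f ∘ Φ = reebTilde (fun z : Y => f ⟨H (z, 1), h1mem z⟩) := by
  set g : Y → ℝ := fun z : Y => f ⟨H (z, 1), h1mem z⟩ with hg
  -- the retraction r : Y → A
  set r : Y → A := fun y => ⟨H (y, 1), h1mem y⟩ with hr
  have hrc : Continuous r := by
    apply Continuous.subtype_mk
    exact hH.comp (continuous_id.prodMk continuous_const)
  have hfr : ∀ y : Y, f (r y) = g y := fun y => rfl
  -- g ∘ ι = f on A
  have hgι : ∀ a : A, g (a : Y) = f a := by
    intro a
    simp only [hg]
    congr 1
    exact Subtype.ext (h1fix a a.2)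
  -- Φ
  have hΦrel : ∀ x y : Y, ReebRel g x y →
      Quot.mk (ReebRel f) (r x) = Quot.mk (ReebRel f) (r y) := by
    intro x y h
    exact Quot.sound (h.map hrc hfr)
  -- Ψ
  have hΨrel : ∀ a b : A, ReebRel f a b →
      Quot.mk (ReebRel g) (a : Y) = Quot.mk (ReebRel g) (b : Y) := by
    intro a b h
    exact Quot.sound (h.map continuous_subtype_val hgι)
  refine ⟨Quot.lift (fun y => Quot.mk (ReebRel f) (r y)) hΦrel,
    Quot.lift (fun a : A => Quot.mk (ReebRel g) (a : Y)) hΨrel, ?_, ?_, ?_, ?_, ?_, ?_, ?_⟩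
  · exact continuous_quot_lift _ ((continuous_quot_mk).comp hrc)
  · exact continuous_quot_lift _ ((continuous_quot_mk).comp continuous_subtype_val)
  · intro y; rfl
  · intro a; rfl
  · funext q
    induction q using Quot.ind with
    | _ a =>
      simp only [Function.comp_apply, id_eq]
      exact congrArg (Quot.mk (ReebRel f)) (Subtype.ext (h1fix a a.2))
  · funext q
    induction q using Quot.ind with
    | _ y =>
      simp only [Function.comp_apply, id_eq]
      refine (Quot.sound ?_).symm
      -- ReebRel g y (H (y,1)) via the path t ↦ H (y, t)
      show (H (y, 1) : Y) ∈ connectedComponentIn (g ⁻¹' {g y}) y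
      have hpathc : Continuous fun t : unitInterval => H (y, t) :=
        hH.comp (continuous_const.prodMk continuous_id)
      have hsub : (fun t : unitInterval => H (y, t)) '' univ ⊆ g ⁻¹' {g y} := by
        rintro _ ⟨t, -, rfl⟩
        simp only [mem_preimage, mem_singleton_iff, hg]
        congr 1
        exact Subtype.ext (hpath y t)
      have hconn : IsPreconnected ((fun t : unitInterval => H (y, t)) '' univ) :=
        (isPreconnected_univ).image _ hpathc.continuousOn
      have hmem0 : y ∈ (fun t : unitInterval => H (y, t)) '' univ :=
        ⟨0, mem_univ _, h0 y⟩
      have hmem1 : H (y, 1) ∈ (fun t : unitInterval => H (y, t)) '' univ :=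
        ⟨1, mem_univ _, rfl⟩
      exact (hconn.subset_connectedComponentIn hmem0 hsub) hmem1
  · funext q
    induction q using Quot.ind with
    | _ y => rfl
end
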